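/- For every d ≥ 1, k with 0 ≤ k ≤ d, and j with 0 ≤ j ≤ d, we have c_{d,k}(j) ≤ c_{d+1,k}(j). -/
import Mathlib

open Polynomial Finset

/-- The integer polynomial `d!·P_{d,k}` in the variable `n`, whose coefficients are the
numbers `c_{d,k}(j)`. -/
noncomputable def Qpoly (d k : ℕ) : Polynomial ℤ :=
  ∑ i ∈ Finset.range (k + 1), Polynomial.C (k.choose i : ℤ) *
    ∏ m ∈ Finset.range d, (Polynomial.X + Polynomial.C ((m : ℤ) + 1 - (i : ℤ)))

/-- The product `∏_{m=1}^d (X + m - i)`. -/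
noncomputable def Pp (d i : ℕ) : Polynomial ℤ :=
  ∏ m ∈ Finset.range d, (X + C ((m : ℤ) + 1 - (i : ℤ)))

/-- The auxiliary sum `∑_i C(k,i) P_{i+1}^{(d)}`. -/
noncomputable def Up (d k : ℕ) : Polynomial ℤ :=
  ∑ i ∈ Finset.range (k + 1), C (k.choose i : ℤ) * Pp d (i+1)

lemma Qpoly_eq (d k : ℕ) : Qpoly d k = ∑ i ∈ range (k + 1), C (k.choose i : ℤ) * Pp d i := rfl

lemma Up_eq (d k : ℕ) : Up d k = ∑ i ∈ range (k + 1), C (k.choose i : ℤ) * Pp d (i+1) := rfl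

lemma Pp_succ (d i : ℕ) : Pp (d+1) i = Pp d i * (X + C ((d:ℤ) + 1 - i)) := by
  rw [Pp, Pp, prod_range_succ]

lemma Pp_shift (d i : ℕ) : Pp d (i+1) = ∏ m ∈ range d, (X + C ((m:ℤ) - i)) := by
  unfold Pp
  refine prod_congr rfl fun m _ => ?_
  push_cast
  ring_nf

lemma Pp_succ_shift (d i : ℕ) : Pp (d+1) (i+1) = (X - C (i:ℤ)) * Pp d i := by
  rw [Pp_shift, prod_range_succ']
  have h1 : (∏ x ∈ range d, (X + C ((((x+1):ℕ):ℤ) - i))) = Pp d i := by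
    refine prod_congr rfl fun m _ => ?_
    push_cast; ring_nf
  rw [h1]
  have : (X + C (((0:ℕ):ℤ) - i)) = X - C (i:ℤ) := by
    push_cast; rw [zero_sub, map_neg, sub_eq_add_neg]
  rw [this, mul_comm]

lemma ch1 (k i : ℕ) (h : i ≤ k) :
    (k.choose i : ℤ) * ((k:ℤ) - i) = (k:ℤ) * ((k-1).choose i : ℤ) := by
  cases k with
  | zero => interval_cases i; simp
  | succ k' =>
    have hnat : (k'+1).choose i * ((k'+1) - i) = (k'+1) * k'.choose i := by
      rw [← Nat.choose_succ_right_eq, ← Nat.add_one_mul_choose_eq]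
    have h5 := congrArg (Nat.cast : ℕ → ℤ) hnat
    push_cast [Nat.cast_sub h] at h5
    simp only [Nat.add_sub_cancel]
    push_cast
    linear_combination h5

/-- Pascal recurrence in `k`. -/
lemma lemA (d k : ℕ) : Qpoly d (k+1) = Qpoly d k + Up d k := by
  rw [Qpoly_eq, sum_range_succ']
  have h1 : ∀ i ∈ range (k+1),
      C (((k+1).choose (i+1) : ℤ)) * Pp d (i+1)
        = C ((k.choose i : ℤ)) * Pp d (i+1) + C ((k.choose (i+1) : ℤ)) * Pp d (i+1) := by
    intro i _
    rw [Nat.choose_succ_succ]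
    push_cast
    rw [map_add, add_mul]
  rw [sum_congr rfl h1, sum_add_distrib]
  have h2 : (∑ i ∈ range (k+1), C ((k.choose (i+1) : ℤ)) * Pp d (i+1))
      + C (((k+1).choose 0 : ℤ)) * Pp d 0 = Qpoly d k := by
    have h3 : C (((k+1).choose 0 : ℤ)) * Pp d 0 = C ((k.choose 0 : ℤ)) * Pp d 0 := by simp
    rw [h3, ← sum_range_succ' (fun i => C ((k.choose i : ℤ)) * Pp d i) (k+1),
      sum_range_succ, Qpoly_eq]
    simp
  have hU : Up d k = ∑ x ∈ range (k+1), C ((k.choose x : ℤ)) * Pp d (x+1) := rfl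
  rw [hU]
  linear_combination h2

/-- Recurrence for `Up` in `d`. -/
lemma lemB (d k : ℕ) : Up (d+1) k = X * Qpoly d k - C (k:ℤ) * Up d (k-1) := by
  have h1 : Up (d+1) k = X * Qpoly d k
      - ∑ i ∈ range (k+1), C ((k.choose i : ℤ) * i) * Pp d i := by
    rw [Up_eq, Qpoly_eq, mul_sum, ← sum_sub_distrib]
    refine sum_congr rfl fun i _ => ?_
    rw [Pp_succ_shift, map_mul]
    ring
  rw [h1]
  congr 1
  cases k with
  | zero => simp
  | succ k' =>
    rw [sum_range_succ' (fun i => C (((k'+1).choose i : ℤ) * i) * Pp d i) (k'+1)]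
    have h2 : ∀ i ∈ range (k'+1),
        C (((k'+1).choose (i+1) : ℤ) * ((i+1 : ℕ) : ℤ)) * Pp d (i+1)
          = C (((k'+1 : ℕ) : ℤ)) * (C ((k'.choose i : ℤ)) * Pp d (i+1)) := by
      intro i _
      have h3 : ((k'+1).choose (i+1)) * (i+1) = (k'+1) * k'.choose i :=
        (Nat.add_one_mul_choose_eq k' i).symm
      have h4 : (((k'+1).choose (i+1) : ℕ) : ℤ) * (((i+1 : ℕ)) : ℤ)
          = (((k'+1:ℕ)) : ℤ) * ((k'.choose i : ℕ) : ℤ) := by exact_mod_cast h3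
      rw [← mul_assoc, ← map_mul, h4, map_mul]
    rw [sum_congr rfl h2, ← mul_sum]
    simp [Up_eq]

/-- The basic recurrence in `d`. -/
lemma lemR1 (d k : ℕ) :
    Qpoly (d+1) k = (X + C ((d:ℤ) + 1 - k)) * Qpoly d k + C (k:ℤ) * Qpoly d (k-1) := by
  have h1 : Qpoly (d+1) k = (X + C ((d:ℤ) + 1 - k)) * Qpoly d k
      + ∑ i ∈ range (k+1), C ((k.choose i : ℤ) * ((k:ℤ) - i)) * Pp d i := by
    rw [Qpoly_eq, Qpoly_eq, mul_sum, ← sum_add_distrib]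
    refine sum_congr rfl fun i _ => ?_
    rw [Pp_succ]
    have : ((d:ℤ) + 1 - i) = ((d:ℤ) + 1 - k) + ((k:ℤ) - i) := by ring
    rw [this, map_add, map_mul]
    ring
  rw [h1]
  congr 1
  have h2 : ∀ i ∈ range (k+1),
      C ((k.choose i : ℤ) * ((k:ℤ) - i)) * Pp d i
        = C ((k:ℤ)) * (C (((k-1).choose i : ℤ)) * Pp d i) := by
    intro i hi
    rw [ch1 k i (Nat.lt_succ_iff.mp (mem_range.mp hi)), map_mul]
    ring
  rw [sum_congr rfl h2, ← mul_sum]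
  cases k with
  | zero => simp
  | succ k' =>
    congr 1
    rw [Qpoly_eq]
    have : k' + 1 - 1 = k' := rfl
    rw [this, sum_range_succ]
    simp

/-- `lemR1` on the diagonal. -/
lemma lemR1diag (d : ℕ) :
    Qpoly (d+1) (d+1) = X * Qpoly d (d+1) + C ((d:ℤ)+1) * Qpoly d d := by
  have h := lemR1 d (d+1)
  push_cast at h
  have e : (d:ℤ) + 1 - ((d:ℤ) + 1) = 0 := by ring
  rw [e, map_zero, add_zero] at h
  simpa using h

/-- First recurrence for the diagonal `D_d = Qpoly d (d+1)`. -/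
lemma lemI2 (d : ℕ) :
    Qpoly (d+1) (d+2) = (2*X - C ((d:ℤ)+1)) * Qpoly d (d+1)
      + C (2*((d:ℤ)+1)) * Qpoly d d := by
  have hA1 := lemA (d+1) (d+1)
  have hB := lemB d (d+1)
  have hA2 := lemA d d
  have hR := lemR1diag d
  simp only [Nat.add_sub_cancel] at hB
  push_cast at hB ⊢
  simp only [map_add, map_mul, map_one, map_ofNat] at hB hR ⊢
  linear_combination hA1 + hR + hB + (C (d:ℤ) + 1) * hA2

/-- `2·Qpoly(d+1,d+1) = Qpoly(d+1,d+2) + (d+1)·Qpoly(d,d+1)`. -/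
lemma lemTwo (d : ℕ) :
    C 2 * Qpoly (d+1) (d+1) = Qpoly (d+1) (d+2) + C ((d:ℤ)+1) * Qpoly d (d+1) := by
  have hI2 := lemI2 d
  have hR := lemR1diag d
  simp only [map_add, map_mul, map_one, map_ofNat] at hI2 hR ⊢
  linear_combination 2 * hR - hI2

/-- The nonnegative recurrence for the diagonal. -/
lemma lemDrec (d : ℕ) :
    Qpoly (d+2) (d+3) = C 2 * (X * Qpoly (d+1) (d+2))
      + C (((d:ℤ)+1)*((d:ℤ)+2)) * Qpoly d (d+1) := by
  have hI2 := lemI2 (d+1)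
  have hT := lemTwo d
  push_cast at hI2 ⊢
  simp only [map_add, map_mul, map_one, map_ofNat] at hI2 hT ⊢
  linear_combination hI2 + (C (d:ℤ) + 2) * hT

lemma coeff_X_mul_nonneg {Q : Polynomial ℤ} (h : ∀ j, 0 ≤ Q.coeff j) (j : ℕ) :
    0 ≤ (X * Q).coeff j := by
  cases j with
  | zero => simp [Polynomial.mul_coeff_zero]
  | succ n => rw [Polynomial.coeff_X_mul]; exact h n

/-- Nonnegativity of the coefficients `c_{d,k}(j)` for `k ≤ d + 1`. -/
lemma Qpoly_coeff_nonneg : ∀ d k : ℕ, k ≤ d + 1 → ∀ j : ℕ, 0 ≤ (Qpoly d k).coeff j := by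
  intro d
  induction d using Nat.strong_induction_on with
  | _ d ih =>
    match d with
    | 0 =>
      intro k hk j
      interval_cases k
      · have : Qpoly 0 0 = 1 := by simp [Qpoly]
        rw [this, Polynomial.coeff_one]
        split <;> norm_num
      · have : Qpoly 0 1 = C 2 := by
          simp [Qpoly, Finset.sum_range_succ]
          norm_num
        rw [this, Polynomial.coeff_C]
        split <;> norm_num
    | 1 =>
      intro k hk j
      interval_cases k
      · have : Qpoly 1 0 = X + C 1 := by
          simp [Qpoly, Finset.sum_range_succ, Finset.prod_range_succ]
        rw [this, Polynomial.coeff_add, Polynomial.coeff_X, Polynomial.coeff_C]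
        split <;> split <;> norm_num
      · have : Qpoly 1 1 = C 2 * X + C 1 := by
          simp [Qpoly, Finset.sum_range_succ, Finset.prod_range_succ]
          ring
        rw [this, Polynomial.coeff_add, Polynomial.coeff_C_mul, Polynomial.coeff_X,
          Polynomial.coeff_C]
        split <;> split <;> norm_num
      · have : Qpoly 1 2 = C 4 * X := by
          simp [Qpoly, Finset.sum_range_succ, Finset.prod_range_succ]
          ring
        rw [this, Polynomial.coeff_C_mul, Polynomial.coeff_X]
        split <;> norm_num
    | (d+2) =>
      intro k hk j
      have ih1 : ∀ k ≤ d + 2, ∀ j, 0 ≤ (Qpoly (d+1) k).coeff j :=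
        fun k hk j => ih (d+1) (by omega) k hk j
      have ih0 : ∀ k ≤ d + 1, ∀ j, 0 ≤ (Qpoly d k).coeff j :=
        fun k hk j => ih d (by omega) k hk j
      rcases Nat.lt_or_ge k (d+3) with hlt | hge
      · -- k ≤ d + 2 : use lemR1
        have hk2 : k ≤ d + 2 := by omega
        have h := lemR1 (d+1) k
        rw [h]
        rw [Polynomial.coeff_add]
        have e1 : ((X + C (((d+1:ℕ):ℤ) + 1 - k)) * Qpoly (d+1) k).coeff j
            = (X * Qpoly (d+1) k).coeff j + (((d+1:ℕ):ℤ) + 1 - k) * (Qpoly (d+1) k).coeff j := by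
          rw [add_mul, Polynomial.coeff_add, Polynomial.coeff_C_mul]
        rw [e1, Polynomial.coeff_C_mul]
        have hc : (0:ℤ) ≤ ((d+1:ℕ):ℤ) + 1 - k := by
          have : (k:ℤ) ≤ ((d:ℤ) + 2) := by exact_mod_cast hk2
          push_cast
          linarith
        have hQ := ih1 k hk2
        have hQ' := ih1 (k-1) (by omega)
        have := coeff_X_mul_nonneg hQ j
        have := mul_nonneg hc (hQ j)
        have := mul_nonneg (by positivity : (0:ℤ) ≤ (k:ℤ)) (hQ' j)
        positivity
      · -- k = d + 3 : use lemDrec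
        have hk3 : k = d + 3 := by omega
        subst hk3
        rw [lemDrec d, Polynomial.coeff_add, Polynomial.coeff_C_mul, Polynomial.coeff_C_mul]
        have hQ := ih1 (d+2) (le_refl _)
        have hQ' := ih0 (d+1) (le_refl _)
        have h1 := coeff_X_mul_nonneg hQ j
        have h2 := hQ' j
        have hc : (0:ℤ) ≤ ((d:ℤ)+1)*((d:ℤ)+2) := by positivity
        nlinarith

/-- For every `d ≥ 1`, `0 ≤ k ≤ d`, `0 ≤ j ≤ d`,
`c_{d,k}(j) ≤ c_{d+1,k}(j)`. -/
theorem stmt12 (d k j : ℕ) (hd : 1 ≤ d) (hk : k ≤ d) (hj : j ≤ d) :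
    (Qpoly d k).coeff j ≤ (Qpoly (d + 1) k).coeff j := by
  have hQ : ∀ j, 0 ≤ (Qpoly d k).coeff j :=
    Qpoly_coeff_nonneg d k (by omega)
  have hQ' : ∀ j, 0 ≤ (Qpoly d (k-1)).coeff j :=
    Qpoly_coeff_nonneg d (k-1) (by omega)
  rw [lemR1 d k, Polynomial.coeff_add]
  have e1 : ((X + C ((d:ℤ) + 1 - k)) * Qpoly d k).coeff j
      = (X * Qpoly d k).coeff j + ((d:ℤ) + 1 - k) * (Qpoly d k).coeff j := by
    rw [add_mul, Polynomial.coeff_add, Polynomial.coeff_C_mul]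
  rw [e1, Polynomial.coeff_C_mul]
  have h1 := coeff_X_mul_nonneg hQ j
  have h2 := mul_nonneg (by positivity : (0:ℤ) ≤ (k:ℤ)) (hQ' j)
  have hc : (1:ℤ) ≤ (d:ℤ) + 1 - k := by
    have : (k:ℤ) ≤ (d:ℤ) := by exact_mod_cast hk
    linarith
  have h3 : (Qpoly d k).coeff j ≤ ((d:ℤ) + 1 - k) * (Qpoly d k).coeff j :=
    le_mul_of_one_le_left (hQ j) hc
  linarith
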